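/- Let M be a Hausdorff, σ-compact C^∞ manifold without boundary modeled on a finite-dimensional real vector space, and let f : M → ℝ be a C^∞ function such that df_p ≠ 0 for every p ∈ f⁻¹(0) (f is a regular equation of the level set f⁻¹(0)). Then there exists a smooth vector field Z on M which is boundary-gradient-like for f, i.e. df_p(Z p) ≥ 0 for every p ∈ M and df_p(Z p) > 0 for every p ∈ f⁻¹(0). -/

import Mathlib

open Manifold Set Bundle Function Filter

set_option linter.unusedSectionVars false
set_option maxHeartbeats 1000000

section helpers

variable {E : Type*} [NormedAddCommGroup E] [NormedSpace ℝ E] [FiniteDimensional ℝ E]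
    {M : Type*} [TopologicalSpace M] [ChartedSpace E M]
    [IsManifold 𝓘(ℝ, E) (⊤ : ℕ∞) M]

/-- Smoothness of a scalar multiple of a smooth section of the tangent bundle. -/
lemma sec_smul {ρ : M → ℝ} {s : ∀ p : M, TangentSpace 𝓘(ℝ, E) p} {x₀ : M}
    (hρ : ContMDiffAt 𝓘(ℝ, E) 𝓘(ℝ, ℝ) (⊤ : ℕ∞) ρ x₀)
    (hs : ContMDiffAt 𝓘(ℝ, E) 𝓘(ℝ, E).tangent (⊤ : ℕ∞)
      (fun p => TotalSpace.mk' E p (s p)) x₀) :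
    ContMDiffAt 𝓘(ℝ, E) 𝓘(ℝ, E).tangent (⊤ : ℕ∞)
      (fun p => TotalSpace.mk' E p (ρ p • s p)) x₀ := by
  rw [Bundle.contMDiffAt_section] at hs ⊢
  set e := trivializationAt E (TangentSpace 𝓘(ℝ, E)) x₀
  refine (hρ.smul hs).congr_of_eventuallyEq ?_
  filter_upwards [e.open_baseSet.mem_nhds
    (mem_baseSet_trivializationAt E (TangentSpace 𝓘(ℝ, E)) x₀)] with p hp
  exact (e.linear ℝ hp).2 (ρ p) (s p)

/-- Smoothness of a sum of smooth sections of the tangent bundle. -/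
lemma sec_add {s t : ∀ p : M, TangentSpace 𝓘(ℝ, E) p} {x₀ : M}
    (hs : ContMDiffAt 𝓘(ℝ, E) 𝓘(ℝ, E).tangent (⊤ : ℕ∞)
      (fun p => TotalSpace.mk' E p (s p)) x₀)
    (ht : ContMDiffAt 𝓘(ℝ, E) 𝓘(ℝ, E).tangent (⊤ : ℕ∞)
      (fun p => TotalSpace.mk' E p (t p)) x₀) :
    ContMDiffAt 𝓘(ℝ, E) 𝓘(ℝ, E).tangent (⊤ : ℕ∞)
      (fun p => TotalSpace.mk' E p (s p + t p)) x₀ := by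
  rw [Bundle.contMDiffAt_section] at hs ht ⊢
  set e := trivializationAt E (TangentSpace 𝓘(ℝ, E)) x₀
  refine (hs.add ht).congr_of_eventuallyEq ?_
  filter_upwards [e.open_baseSet.mem_nhds
    (mem_baseSet_trivializationAt E (TangentSpace 𝓘(ℝ, E)) x₀)] with p hp
  exact (e.linear ℝ hp).1 (s p) (t p)

lemma sec_zero {x₀ : M} :
    ContMDiffAt 𝓘(ℝ, E) 𝓘(ℝ, E).tangent (⊤ : ℕ∞)
      (fun p => TotalSpace.mk' E p (0 : TangentSpace 𝓘(ℝ, E) p)) x₀ :=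
  (contMDiff_zeroSection ℝ (TangentSpace 𝓘(ℝ, E) : M → Type _)).contMDiffAt

lemma sec_sum {ι : Type*} (t : Finset ι) (s : ι → ∀ p : M, TangentSpace 𝓘(ℝ, E) p) {x₀ : M}
    (h : ∀ i ∈ t, ContMDiffAt 𝓘(ℝ, E) 𝓘(ℝ, E).tangent (⊤ : ℕ∞)
      (fun p => TotalSpace.mk' E p (s i p)) x₀) :
    ContMDiffAt 𝓘(ℝ, E) 𝓘(ℝ, E).tangent (⊤ : ℕ∞)
      (fun p => TotalSpace.mk' E p (∑ i ∈ t, s i p)) x₀ := by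
  classical
  induction t using Finset.cons_induction with
  | empty => simp only [Finset.sum_empty]; exact sec_zero
  | cons a t' ha ih =>
      simp only [Finset.sum_cons]
      exact sec_add (h a (Finset.mem_cons_self a t'))
        (ih fun i hi => h i (Finset.mem_cons_of_mem hi))

lemma sec_finsum {ι : Type*} {s : ι → ∀ p : M, TangentSpace 𝓘(ℝ, E) p}
    (hlf : LocallyFinite fun i => {p : M | s i p ≠ 0})
    (h : ∀ i (x : M), ContMDiffAt 𝓘(ℝ, E) 𝓘(ℝ, E).tangent (⊤ : ℕ∞)
      (fun p => TotalSpace.mk' E p (s i p)) x) :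
    ContMDiff 𝓘(ℝ, E) 𝓘(ℝ, E).tangent (⊤ : ℕ∞)
      (fun p => TotalSpace.mk' E p (∑ᶠ i, s i p)) := by
  intro x₀
  obtain ⟨N, hN, hfin⟩ := hlf x₀
  classical
  set T : Finset ι := hfin.toFinset with hT
  have key : ∀ p ∈ N, (∑ᶠ i, s i p) = ∑ i ∈ T, s i p := by
    intro p hp
    refine finsum_eq_sum_of_support_subset _ ?_
    intro i hi
    simp only [hT, Finite.coe_toFinset]
    exact ⟨p, hi, hp⟩
  refine (sec_sum T s (fun i _ => h i x₀)).congr_of_eventuallyEq ?_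
  filter_upwards [hN] with p hp
  simp only [key p hp]

/-- The "chart-constant" local vector field is a smooth section on the chart domain. -/
lemma sec_local (q : M) (v : E) (s : ∀ p : M, TangentSpace 𝓘(ℝ, E) p)
    (hs : ∀ p, s p = tangentCoordChange 𝓘(ℝ, E) q p p v)
    {x₀ : M} (hx₀ : x₀ ∈ (chartAt E q).source) :
    ContMDiffAt 𝓘(ℝ, E) 𝓘(ℝ, E).tangent (⊤ : ℕ∞)
      (fun p => TotalSpace.mk' E p (s p)) x₀ := by
  rw [Bundle.contMDiffAt_section]
  have hO : IsOpen ((chartAt E q).source ∩ (chartAt E x₀).source) :=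
    (chartAt E q).open_source.inter (chartAt E x₀).open_source
  have hmem : ((chartAt E q).source ∩ (chartAt E x₀).source) ∈ nhds x₀ :=
    hO.mem_nhds ⟨hx₀, mem_chart_source E x₀⟩
  have hsm : ContMDiffAt 𝓘(ℝ, E) 𝓘(ℝ, E →L[ℝ] E) (⊤ : ℕ∞)
      (tangentCoordChange 𝓘(ℝ, E) q x₀) x₀ := by
    refine ContMDiffOn.contMDiffAt ?_ hmem
    exact (tangentBundleCore 𝓘(ℝ, E) M).contMDiffOn_coordChange 𝓘(ℝ, E)
      (h := tangentBundleCore.isContMDiff (h := ‹IsManifold 𝓘(ℝ, E) (⊤ : ℕ∞) M›))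
      (achart E q) (achart E x₀)
  have h2 : ContMDiffAt 𝓘(ℝ, E) 𝓘(ℝ, E) (⊤ : ℕ∞)
      (fun p => tangentCoordChange 𝓘(ℝ, E) q x₀ p v) x₀ :=
    hsm.clm_apply contMDiffAt_const
  refine h2.congr_of_eventuallyEq ?_
  filter_upwards [hmem] with p hp
  have h1 : (trivializationAt E (TangentSpace 𝓘(ℝ, E)) x₀ ⟨p, s p⟩).2
      = tangentCoordChange 𝓘(ℝ, E) p x₀ p (s p) := rfl
  rw [h1, hs p, tangentCoordChange_comp]
  refine ⟨⟨?_, ?_⟩, ?_⟩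
  · rw [extChartAt_source]; exact hp.1
  · exact mem_extChartAt_source (I := 𝓘(ℝ, E)) p
  · rw [extChartAt_source]; exact hp.2

/-- Continuity of `p ↦ df_p (Z p)` for a section smooth at a point. -/
lemma cont_df {f : M → ℝ} (hf : ContMDiff 𝓘(ℝ, E) 𝓘(ℝ, ℝ) (⊤ : ℕ∞) f)
    {Z : ∀ p : M, TangentSpace 𝓘(ℝ, E) p} {x₀ : M}
    (hZ : ContMDiffAt 𝓘(ℝ, E) 𝓘(ℝ, E).tangent (⊤ : ℕ∞)
      (fun p => TotalSpace.mk' E p (Z p)) x₀) :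
    ContinuousAt (fun p => (mfderiv 𝓘(ℝ, E) 𝓘(ℝ, ℝ) f p (Z p) : ℝ)) x₀ := by
  have h1 : ContMDiff 𝓘(ℝ, E).tangent 𝓘(ℝ, ℝ).tangent (⊤ : ℕ∞)
      (tangentMap 𝓘(ℝ, E) 𝓘(ℝ, ℝ) f) := hf.contMDiff_tangentMap (by simp)
  have h2 : ContinuousAt
      (fun p => tangentMap 𝓘(ℝ, E) 𝓘(ℝ, ℝ) f (TotalSpace.mk' E p (Z p))) x₀ :=
    h1.continuous.continuousAt.comp hZ.continuousAt
  have h3 : Continuous (fun x : TangentBundle 𝓘(ℝ, ℝ) ℝ => (x.2 : ℝ)) :=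
    continuous_snd.comp (tangentBundleModelSpaceHomeomorph 𝓘(ℝ, ℝ)).continuous
  exact h3.continuousAt.comp h2

end helpers

/-- On a Hausdorff σ-compact smooth manifold `M` (without boundary, modeled on a
finite-dimensional real vector space), for any smooth function `f : M → ℝ` whose differential is
nonzero at every point of `f⁻¹(0)`, there exists a smooth vector field `Z` on `M` which is
boundary-gradient-like for `f`: `df_p(Z p) ≥ 0` everywhere and `df_p(Z p) > 0` on `f⁻¹(0)`. -/
theorem stmt_1 {E : Type*} [NormedAddCommGroup E] [NormedSpace ℝ E] [FiniteDimensional ℝ E]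
    {M : Type*} [TopologicalSpace M] [ChartedSpace E M]
    [IsManifold 𝓘(ℝ, E) (⊤ : ℕ∞) M] [T2Space M] [SigmaCompactSpace M]
    (f : M → ℝ) (hf : ContMDiff 𝓘(ℝ, E) 𝓘(ℝ, ℝ) (⊤ : ℕ∞) f)
    (hreg : ∀ p : M, f p = 0 → mfderiv 𝓘(ℝ, E) 𝓘(ℝ, ℝ) f p ≠ 0) :
    ∃ Z : (p : M) → TangentSpace 𝓘(ℝ, E) p,
      ContMDiff 𝓘(ℝ, E) 𝓘(ℝ, E).tangent (⊤ : ℕ∞)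
        (fun p : M => (⟨p, Z p⟩ : TangentBundle 𝓘(ℝ, E) M)) ∧
      (∀ p : M, (0:ℝ) ≤ (mfderiv 𝓘(ℝ, E) 𝓘(ℝ, ℝ) f p (Z p) : ℝ)) ∧
      (∀ p : M, f p = 0 → (0:ℝ) < (mfderiv 𝓘(ℝ, E) 𝓘(ℝ, ℝ) f p (Z p) : ℝ)) := by
  classical
  -- Step 1: local data near each zero of `f`
  have key : ∀ q : {p : M // f p = 0}, ∃ (U : Set M) (s : ∀ p : M, TangentSpace 𝓘(ℝ, E) p),
      IsOpen U ∧ (q : M) ∈ U ∧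
      (∀ p ∈ U, ContMDiffAt 𝓘(ℝ, E) 𝓘(ℝ, E).tangent (⊤ : ℕ∞)
        (fun p' => TotalSpace.mk' E p' (s p')) p) ∧
      (∀ p ∈ U, (0:ℝ) < (mfderiv 𝓘(ℝ, E) 𝓘(ℝ, ℝ) f p (s p) : ℝ)) := by
    rintro ⟨q, hq⟩
    obtain ⟨L', hL'⟩ : ∃ L' : E →L[ℝ] ℝ, ∀ u : E, L' u = mfderiv 𝓘(ℝ, E) 𝓘(ℝ, ℝ) f q u :=
      ⟨mfderiv 𝓘(ℝ, E) 𝓘(ℝ, ℝ) f q, fun _ => rfl⟩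
    obtain ⟨w, hw⟩ : ∃ w : E, L' w ≠ 0 := by
      by_contra h
      push_neg at h
      refine hreg q hq (ContinuousLinearMap.ext fun u => ?_)
      have := h u
      rw [hL' u] at this
      exact this
    set v : E := (L' w)⁻¹ • w with hv
    have hLv' : L' v = 1 := by
      rw [hv, map_smul, smul_eq_mul, inv_mul_cancel₀ hw]
    set s : ∀ p : M, TangentSpace 𝓘(ℝ, E) p :=
      fun p => (tangentCoordChange 𝓘(ℝ, E) q p p v : TangentSpace 𝓘(ℝ, E) p) with hs
    have hsm : ∀ p ∈ (chartAt E q).source,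
        ContMDiffAt 𝓘(ℝ, E) 𝓘(ℝ, E).tangent (⊤ : ℕ∞)
          (fun p' => TotalSpace.mk' E p' (s p')) p := by
      intro p hp
      exact sec_local q v s (fun _ => rfl) hp
    have hsq : s q = v :=
      tangentCoordChange_self (I := 𝓘(ℝ, E))
        (mem_extChartAt_source (I := 𝓘(ℝ, E)) q)
    set c : M → ℝ := fun p => mfderiv 𝓘(ℝ, E) 𝓘(ℝ, ℝ) f p (s p) with hc
    have hval : c q = 1 := by
      rw [show c q = L' (s q) from (hL' (s q)).symm, hsq, hLv']
    have hcont : ContinuousAt c q := cont_df hf (hsm q (mem_chart_source E q))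
    have hev : ∀ᶠ p in nhds q, 0 < c p := by
      have hmem : Set.Ioi (0:ℝ) ∈ nhds (c q) := by
        rw [hval]; exact Ioi_mem_nhds one_pos
      exact hcont hmem
    obtain ⟨O, hO1, hO2, hO3⟩ := mem_nhds_iff.1 hev
    refine ⟨O ∩ (chartAt E q).source, s, hO2.inter (chartAt E q).open_source,
      ⟨hO3, mem_chart_source E q⟩, fun p hp => hsm p hp.2, fun p hp => hO1 hp.1⟩
  choose U s hUopen hqU hsmooth hpos using key
  -- Step 2: the covering indexed by `Option {p // f p = 0}`
  set ι := Option {p : M // f p = 0} with hι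
  set Uu : ι → Set M := fun i => i.elim {p | f p ≠ 0} U with hUu
  set gg : ι → ∀ p : M, TangentSpace 𝓘(ℝ, E) p :=
    fun i => i.elim (fun _ => 0) s with hgg
  have hUuopen : ∀ i, IsOpen (Uu i) := by
    rintro (_ | q)
    · exact isOpen_compl_iff.2 (isClosed_eq (hf.continuous) continuous_const)
    · exact hUopen q
  have hUucover : Set.univ ⊆ ⋃ i, Uu i := by
    intro p _
    by_cases hp : f p = 0
    · exact mem_iUnion.2 ⟨some ⟨p, hp⟩, hqU ⟨p, hp⟩⟩
    · exact mem_iUnion.2 ⟨none, hp⟩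
  obtain ⟨ρ, hρ⟩ := SmoothPartitionOfUnity.exists_isSubordinate 𝓘(ℝ, E)
    isClosed_univ Uu hUuopen hUucover
  -- Step 3: glue
  set σ : ι → ∀ p : M, TangentSpace 𝓘(ℝ, E) p :=
    fun i p => ρ i p • gg i p with hσ
  set Z : ∀ p : M, TangentSpace 𝓘(ℝ, E) p := fun p => ∑ᶠ i, σ i p with hZ
  set d : ι → M → ℝ := fun i p => mfderiv 𝓘(ℝ, E) 𝓘(ℝ, ℝ) f p (gg i p) with hd
  -- smoothness of the pieces
  have hggsm : ∀ i, ∀ x₀ ∈ Uu i, ContMDiffAt 𝓘(ℝ, E) 𝓘(ℝ, E).tangent (⊤ : ℕ∞)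
      (fun p => TotalSpace.mk' E p (gg i p)) x₀ := by
    rintro (_ | q) x₀ hx₀
    · exact sec_zero
    · exact hsmooth q x₀ hx₀
  have hσsm : ∀ i (x₀ : M), ContMDiffAt 𝓘(ℝ, E) 𝓘(ℝ, E).tangent (⊤ : ℕ∞)
      (fun p => TotalSpace.mk' E p (σ i p)) x₀ := by
    intro i x₀
    by_cases hx : x₀ ∈ tsupport (ρ i)
    · exact sec_smul ((ρ i).contMDiff.contMDiffAt) (hggsm i x₀ (hρ i hx))
    · refine sec_zero.congr_of_eventuallyEq ?_
      have hopen : IsOpen (tsupport (ρ i))ᶜ := (isClosed_tsupport _).isOpen_compl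
      filter_upwards [hopen.mem_nhds hx] with p hp
      have : ρ i p = 0 := image_eq_zero_of_notMem_tsupport hp
      simp only [hσ, this, zero_smul]
  have hσlf : LocallyFinite fun i => {p : M | σ i p ≠ 0} := by
    refine ρ.locallyFinite.subset fun i p hp => ?_
    simp only [Set.mem_setOf_eq, hσ] at hp
    intro h0
    exact hp (by rw [h0, zero_smul])
  have hZsm : ContMDiff 𝓘(ℝ, E) 𝓘(ℝ, E).tangent (⊤ : ℕ∞)
      (fun p => TotalSpace.mk' E p (Z p)) := sec_finsum hσlf hσsm
  -- Step 4: pointwise values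
  have hfin : ∀ p : M, {i : ι | σ i p ≠ 0}.Finite := by
    intro p
    refine (ρ.locallyFinite.point_finite p).subset fun i hi => ?_
    simp only [Set.mem_setOf_eq, hσ] at hi ⊢
    intro h0
    exact hi (by rw [h0, zero_smul])
  have hterm : ∀ p : M, ∀ i : ι, ρ i p ≠ 0 →
      (0:ℝ) ≤ d i p ∧ (f p = 0 → (0:ℝ) < d i p) := by
    rintro p (_ | q) hρp
    · have hpU : p ∈ Uu none := hρ none (subset_closure (by exact hρp))
      have h0 : d none p = 0 := (mfderiv 𝓘(ℝ, E) 𝓘(ℝ, ℝ) f p).map_zero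
      exact ⟨le_of_eq h0.symm, fun hp0 => absurd hp0 hpU⟩
    · have hpU : p ∈ Uu (some q) := hρ (some q) (subset_closure (by exact hρp))
      have hp := hpos q p hpU
      exact ⟨le_of_lt hp, fun _ => hp⟩
  have hdf : ∀ p : M, (mfderiv 𝓘(ℝ, E) 𝓘(ℝ, ℝ) f p (Z p) : ℝ)
      = ∑ i ∈ (hfin p).toFinset, ρ i p * d i p := by
    intro p
    have h1 : Z p = ∑ i ∈ (hfin p).toFinset, σ i p := by
      refine finsum_eq_sum_of_support_subset _ ?_
      intro i hi
      simpa using hi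
    have h2 : mfderiv 𝓘(ℝ, E) 𝓘(ℝ, ℝ) f p (Z p)
        = ∑ i ∈ (hfin p).toFinset, mfderiv 𝓘(ℝ, E) 𝓘(ℝ, ℝ) f p (σ i p) := by
      rw [h1, map_sum]
    refine h2.trans ?_
    refine Finset.sum_congr rfl fun i _ => ?_
    show (mfderiv 𝓘(ℝ, E) 𝓘(ℝ, ℝ) f p (ρ i p • gg i p) : ℝ) = ρ i p * d i p
    rw [map_smul]
    rfl
  refine ⟨Z, hZsm, ?_, ?_⟩
  · intro p
    rw [hdf p]
    refine Finset.sum_nonneg fun i hi => ?_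
    by_cases hρp : ρ i p = 0
    · rw [hρp, zero_mul]
    · exact mul_nonneg (ρ.nonneg i p) ((hterm p i hρp).1)
  · intro p hp0
    rw [hdf p]
    obtain ⟨j, hj⟩ := ρ.exists_pos_of_mem (Set.mem_univ p)
    have hjρ : ρ j p ≠ 0 := ne_of_gt hj
    have hjpos : (0:ℝ) < ρ j p * d j p := mul_pos hj ((hterm p j hjρ).2 hp0)
    refine Finset.sum_pos' (fun i hi => ?_) ⟨j, ?_, hjpos⟩
    · by_cases hρp : ρ i p = 0
      · rw [hρp, zero_mul]
      · exact mul_nonneg (ρ.nonneg i p) ((hterm p i hρp).1)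
    · have hne : σ j p ≠ 0 := by
        intro h0
        have h1 : ρ j p * d j p = 0 := by
          have h2 : (mfderiv 𝓘(ℝ, E) 𝓘(ℝ, ℝ) f p (σ j p) : ℝ) = ρ j p * d j p := by
            show (mfderiv 𝓘(ℝ, E) 𝓘(ℝ, ℝ) f p (ρ j p • gg j p) : ℝ) = ρ j p * d j p
            rw [map_smul]
            rfl
          rw [← h2, h0, (mfderiv 𝓘(ℝ, E) 𝓘(ℝ, ℝ) f p).map_zero]
          rfl
        exact (ne_of_gt hjpos) h1
      exact (Set.Finite.mem_toFinset _).2 hne
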